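/- Let T be a partitioned tensor with equal-size parts in each dimension and M_X, M_Y, M_Z parts in the X-, Y-, Z-dimensions. Suppose there is a set G of triples of partition-preserving, structure-preserving permutations such that a uniformly random element of G maps any fixed part to a uniformly random part in each dimension. Then for any subsets of parts P_X, P'_X ⊆ P_X-parts, P_Y, P'_Y, P_Z, P'_Z, there exists (π_X, π_Y, π_Z) ∈ G simultaneously satisfying |P_X ∩ π_X(P'_X)| ≤ 4|P_X||P'_X|/M_X, |P_Y ∩ π_Y(P'_Y)| ≤ 4|P_Y||P'_Y|/M_Y, and |P_Z ∩ π_Z(P'_Z)| ≤ 4|P_Z||P'_Z|/M_Z. -/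

import Mathlib

open Finset


lemma shuffle_aux {ι : Type*} {M : ℕ} (G : Finset ι)
    (Q : Fin M → Fin M → ι → Prop) [∀ t t' g, Decidable (Q t t' g)]
    (hunif : ∀ t t', (G.filter fun g => Q t t' g).card * M = G.card)
    (P P' : Finset (Fin M)) :
    ((G.filter fun g => ¬ (((P.filter fun t' => ∃ t ∈ P', Q t t' g).card : ℝ)
        ≤ 4 * P.card * P'.card / M)).card : ℝ) * 4 ≤ G.card := by
  rcases P.eq_empty_or_nonempty with hP | hP
  · simp [hP]
  rcases P'.eq_empty_or_nonempty with hP' | hP'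
  · have : ∀ g : ι, ((P.filter fun t' => ∃ t ∈ P', Q t t' g).card : ℝ)
        ≤ 4 * P.card * P'.card / M := by
      intro g; simp [hP']
    rw [Finset.filter_false_of_mem (fun g _ => not_not_intro (this g))]
    simp
  have hM : 0 < M := (hP.exists_mem.choose : Fin M).pos
  set B : ℝ := 4 * P.card * P'.card / M with hB
  have hBpos : 0 < B := by
    have h1 : 0 < (P.card : ℝ) := by exact_mod_cast hP.card_pos
    have h2 : 0 < (P'.card : ℝ) := by exact_mod_cast hP'.card_pos
    have h3 : 0 < (M : ℝ) := by exact_mod_cast hM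
    positivity
  -- expectation bound
  have hpoint : ∀ g : ι, ((P.filter fun t' => ∃ t ∈ P', Q t t' g).card : ℝ)
      ≤ ∑ t' ∈ P, ∑ t ∈ P', if Q t t' g then (1:ℝ) else 0 := by
    intro g
    rw [Finset.card_filter]
    push_cast
    apply Finset.sum_le_sum
    intro t' _
    by_cases h : ∃ t ∈ P', Q t t' g
    · obtain ⟨t, ht, hq⟩ := h
      rw [if_pos ⟨t, ht, hq⟩]
      have := Finset.single_le_sum (f := fun t => if Q t t' g then (1:ℝ) else 0)
        (fun i _ => by positivity) ht
      simpa [hq] using this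
    · rw [if_neg h]
      positivity
  have hsum : ∑ g ∈ G, ((P.filter fun t' => ∃ t ∈ P', Q t t' g).card : ℝ)
      ≤ B * G.card / 4 := by
    calc ∑ g ∈ G, ((P.filter fun t' => ∃ t ∈ P', Q t t' g).card : ℝ)
        ≤ ∑ g ∈ G, ∑ t' ∈ P, ∑ t ∈ P', if Q t t' g then (1:ℝ) else 0 :=
          Finset.sum_le_sum fun g _ => hpoint g
      _ = ∑ t' ∈ P, ∑ t ∈ P', ∑ g ∈ G, if Q t t' g then (1:ℝ) else 0 := by
          rw [Finset.sum_comm]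
          exact Finset.sum_congr rfl fun t' _ => Finset.sum_comm
      _ = ∑ t' ∈ P, ∑ t ∈ P', ((G.filter fun g => Q t t' g).card : ℝ) := by
          refine Finset.sum_congr rfl fun t' _ => Finset.sum_congr rfl fun t _ => ?_
          rw [Finset.card_filter]; push_cast; rfl
      _ = ∑ t' ∈ P, ∑ t ∈ P', (G.card : ℝ) / M := by
          refine Finset.sum_congr rfl fun t' _ => Finset.sum_congr rfl fun t _ => ?_
          have := hunif t t'
          have hM' : (M:ℝ) ≠ 0 := by positivity
          field_simp
          exact_mod_cast this
      _ = P.card * P'.card * ((G.card : ℝ) / M) := by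
          simp [Finset.sum_const, mul_assoc]
      _ = B * G.card / 4 := by rw [hB]; field_simp
  -- Markov
  set S := G.filter fun g => ¬ (((P.filter fun t' => ∃ t ∈ P', Q t t' g).card : ℝ) ≤ B)
    with hS
  have hmark : (S.card : ℝ) * B ≤ ∑ g ∈ G, ((P.filter fun t' => ∃ t ∈ P', Q t t' g).card : ℝ) := by
    calc (S.card : ℝ) * B = ∑ _g ∈ S, B := by simp [mul_comm]
      _ ≤ ∑ g ∈ S, ((P.filter fun t' => ∃ t ∈ P', Q t t' g).card : ℝ) := by
          apply Finset.sum_le_sum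
          intro g hg
          have := (Finset.mem_filter.mp hg).2
          linarith [lt_of_not_ge this]
      _ ≤ ∑ g ∈ G, ((P.filter fun t' => ∃ t ∈ P', Q t t' g).card : ℝ) := by
          apply Finset.sum_le_sum_of_subset_of_nonneg (Finset.filter_subset _ _)
          intro g _ _; positivity
  have : (S.card : ℝ) * B ≤ B * G.card / 4 := le_trans hmark hsum
  have := (mul_le_mul_iff_of_pos_right hBpos).mp (by linarith [this] : (S.card : ℝ) * B ≤ (G.card / 4 : ℝ) * B)
  linarith

/-- Shuffling lemma: let `T` be a partitioned tensor with equal-size parts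
(`M_X`, `M_Y`, `M_Z` parts in the three dimensions), and let `G` be a set of triples of
partition-preserving, structure-preserving permutations such that a uniformly random
element of `G` maps any fixed part to a uniformly random part in each dimension.
Then for any sets of parts `P_X, P'_X`, `P_Y, P'_Y`, `P_Z, P'_Z` there is a single
`(π_X, π_Y, π_Z) ∈ G` with `|P_W ∩ π_W(P'_W)| ≤ 4|P_W||P'_W|/M_W` for `W ∈ {X,Y,Z}`. -/
theorem stmt14 {X Y Z : Type*} [Fintype X] [Fintype Y] [Fintype Z]
    [DecidableEq X] [DecidableEq Y] [DecidableEq Z]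
    {MX MY MZ : ℕ} (pX : X → Fin MX) (pY : Y → Fin MY) (pZ : Z → Fin MZ)
    (T : X → Y → Z → ℝ)
    (G : Finset (Equiv.Perm X × Equiv.Perm Y × Equiv.Perm Z)) (hG : G.Nonempty)
    -- partition-preserving: each permutation induces a permutation of the parts
    (hpartX : ∀ g ∈ G, ∃ σ : Equiv.Perm (Fin MX), ∀ x, pX (g.1 x) = σ (pX x))
    (hpartY : ∀ g ∈ G, ∃ σ : Equiv.Perm (Fin MY), ∀ y, pY (g.2.1 y) = σ (pY y))
    (hpartZ : ∀ g ∈ G, ∃ σ : Equiv.Perm (Fin MZ), ∀ z, pZ (g.2.2 z) = σ (pZ z))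
    -- structure-preserving: the coefficients of `T` are preserved
    (hstruct : ∀ g ∈ G, ∀ x y z, T x y z = T (g.1 x) (g.2.1 y) (g.2.2 z))
    -- equal-size parts
    (hsizeX : ∀ t t' : Fin MX,
      (univ.filter fun x => pX x = t).card = (univ.filter fun x => pX x = t').card)
    (hsizeY : ∀ t t' : Fin MY,
      (univ.filter fun y => pY y = t).card = (univ.filter fun y => pY y = t').card)
    (hsizeZ : ∀ t t' : Fin MZ,
      (univ.filter fun z => pZ z = t).card = (univ.filter fun z => pZ z = t').card)
    -- uniformity: a random element of `G` maps a fixed part to a uniformly random part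
    (hunifX : ∀ t t' : Fin MX,
      (G.filter fun g => ∀ x, pX x = t → pX (g.1 x) = t').card * MX = G.card)
    (hunifY : ∀ t t' : Fin MY,
      (G.filter fun g => ∀ y, pY y = t → pY (g.2.1 y) = t').card * MY = G.card)
    (hunifZ : ∀ t t' : Fin MZ,
      (G.filter fun g => ∀ z, pZ z = t → pZ (g.2.2 z) = t').card * MZ = G.card) :
    ∀ (PX PX' : Finset (Fin MX)) (PY PY' : Finset (Fin MY)) (PZ PZ' : Finset (Fin MZ)),
      ∃ g ∈ G,
        ((PX.filter fun t' => ∃ t ∈ PX', ∀ x, pX x = t → pX (g.1 x) = t').card : ℝ)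
            ≤ 4 * PX.card * PX'.card / MX ∧
        ((PY.filter fun t' => ∃ t ∈ PY', ∀ y, pY y = t → pY (g.2.1 y) = t').card : ℝ)
            ≤ 4 * PY.card * PY'.card / MY ∧
        ((PZ.filter fun t' => ∃ t ∈ PZ', ∀ z, pZ z = t → pZ (g.2.2 z) = t').card : ℝ)
            ≤ 4 * PZ.card * PZ'.card / MZ := by
  intro PX PX' PY PY' PZ PZ'
  classical
  have hX := shuffle_aux G (fun t t' g => ∀ x, pX x = t → pX (g.1 x) = t') hunifX PX PX'
  have hY := shuffle_aux G (fun t t' g => ∀ y, pY y = t → pY (g.2.1 y) = t') hunifY PY PY'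
  have hZ := shuffle_aux G (fun t t' g => ∀ z, pZ z = t → pZ (g.2.2 z) = t') hunifZ PZ PZ'
  set SX := G.filter fun g => ¬ (((PX.filter fun t' => ∃ t ∈ PX',
    ∀ x, pX x = t → pX (g.1 x) = t').card : ℝ) ≤ 4 * PX.card * PX'.card / MX) with hSX
  set SY := G.filter fun g => ¬ (((PY.filter fun t' => ∃ t ∈ PY',
    ∀ y, pY y = t → pY (g.2.1 y) = t').card : ℝ) ≤ 4 * PY.card * PY'.card / MY) with hSY
  set SZ := G.filter fun g => ¬ (((PZ.filter fun t' => ∃ t ∈ PZ',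
    ∀ z, pZ z = t → pZ (g.2.2 z) = t').card : ℝ) ≤ 4 * PZ.card * PZ'.card / MZ) with hSZ
  have hGpos : (0:ℝ) < G.card := by exact_mod_cast hG.card_pos
  have hcard : ((SX ∪ SY ∪ SZ).card : ℝ) < G.card := by
    have h1 : ((SX ∪ SY ∪ SZ).card : ℕ) ≤ SX.card + SY.card + SZ.card :=
      le_trans (Finset.card_union_le _ _) (by gcongr; exact Finset.card_union_le _ _)
    have h1' : ((SX ∪ SY ∪ SZ).card : ℝ) ≤ (SX.card : ℝ) + SY.card + SZ.card := by
      exact_mod_cast h1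
    linarith
  have hne : (G \ (SX ∪ SY ∪ SZ)).Nonempty := by
    rw [← Finset.card_pos, Finset.card_sdiff_of_subset]
    · have : (SX ∪ SY ∪ SZ).card < G.card := by exact_mod_cast hcard
      omega
    · refine Finset.union_subset (Finset.union_subset ?_ ?_) ?_ <;>
        exact Finset.filter_subset _ _
  obtain ⟨g, hg⟩ := hne
  rw [Finset.mem_sdiff] at hg
  obtain ⟨hgG, hgU⟩ := hg
  rw [Finset.mem_union, Finset.mem_union] at hgU
  push_neg at hgU
  obtain ⟨⟨hx, hy⟩, hz⟩ := hgU
  refine ⟨g, hgG, ?_, ?_, ?_⟩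
  · rw [hSX, Finset.mem_filter] at hx
    exact not_not.mp fun h => hx ⟨hgG, h⟩
  · rw [hSY, Finset.mem_filter] at hy
    exact not_not.mp fun h => hy ⟨hgG, h⟩
  · rw [hSZ, Finset.mem_filter] at hz
    exact not_not.mp fun h => hz ⟨hgG, h⟩
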